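/- Let λ > 0 and let v : ℝ → ℝ be continuously differentiable, odd (v(-x) = -v(x)), with v and v' square-integrable. Define 𝓑(v) = 2∫_ℝ v'(x)² dx - (1/λ²)∫_ℝ sech²(x/λ) v(x)² dx. Then 𝓑(v) ≥ (3/2) ∫_ℝ v'(x)² dx. -/

import Mathlib

open MeasureTheory Real


private lemma coercivity_aux (s c V W L : ℝ) (hs : s ≠ 0) (hc : c ≠ 0) (hL : L ≠ 0)
    (hp : c ^ 2 - s ^ 2 = 1) :
    (2 * V * W * (L * s * c) - V ^ 2 * (c ^ 2 + s ^ 2)) / (L * s * c) ^ 2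
      = W ^ 2 - 2 / L ^ 2 * ((1 / c) ^ 2 * V ^ 2) - (W - V / (L * s * c)) ^ 2 := by
  field_simp
  linear_combination (-V ^ 2) * hp

/-- Proposition 2.2: coercivity of the quadratic form 𝓑 on odd functions. -/
theorem coercivity_bilinear_form_odd
    (lam : ℝ) (hlam : 0 < lam)
    (v : ℝ → ℝ) (hv : ContDiff ℝ 1 v)
    (hodd : ∀ x : ℝ, v (-x) = - v x)
    (hv2 : Integrable (fun x : ℝ => (v x) ^ 2))
    (hv'2 : Integrable (fun x : ℝ => (deriv v x) ^ 2)) :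
    2 * (∫ x : ℝ, (deriv v x) ^ 2)
      - (1 / lam ^ 2) * (∫ x : ℝ, (1 / Real.cosh (x / lam)) ^ 2 * (v x) ^ 2)
    ≥ (3 / 2) * ∫ x : ℝ, (deriv v x) ^ 2 := by
  have hlam' : lam ≠ 0 := ne_of_gt hlam
  have hv0 : v 0 = 0 := by have := hodd 0; simp at this; linarith
  have hvd : Differentiable ℝ v := hv.differentiable one_ne_zero
  have hcd : Continuous (deriv v) := hv.continuous_deriv le_rfl
  -- the integrand of the difference
  set h : ℝ → ℝ := fun x =>
    (deriv v x) ^ 2 - (2 / lam ^ 2) * ((1 / Real.cosh (x / lam)) ^ 2 * (v x) ^ 2) with hh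
  have hcont_sech : Continuous (fun x : ℝ => (1 / Real.cosh (x / lam)) ^ 2 * (v x) ^ 2) := by
    apply Continuous.mul
    · exact (continuous_const.div (Real.continuous_cosh.comp (continuous_id.div_const lam))
        (fun x => (Real.cosh_pos _).ne')).pow 2
    · exact (hv.continuous).pow 2
  have hI2 : Integrable (fun x : ℝ => (1 / Real.cosh (x / lam)) ^ 2 * (v x) ^ 2) := by
    refine hv2.mono' hcont_sech.aestronglyMeasurable ?_
    filter_upwards with x
    have h1 : (1 : ℝ) ≤ Real.cosh (x / lam) := Real.one_le_cosh _
    have h2 : (0:ℝ) < Real.cosh (x / lam) := Real.cosh_pos _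
    have h3 : (1 / Real.cosh (x / lam)) ^ 2 ≤ 1 := by
      rw [div_pow, one_pow]
      rw [div_le_one (by positivity)]
      nlinarith
    have h4 : (0:ℝ) ≤ (v x) ^ 2 := sq_nonneg _
    rw [Real.norm_eq_abs, abs_of_nonneg (by positivity)]
    nlinarith
  have hInt : Integrable h := hv'2.sub (hI2.const_mul _)
  have hhcont : Continuous h := (hcd.pow 2).sub (continuous_const.mul hcont_sech)
  -- evenness
  have hderiv_even : ∀ x : ℝ, deriv v (-x) = deriv v x := by
    intro x
    have hveq : (fun y : ℝ => -v (-y)) = v := funext fun y => by rw [hodd y]; ring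
    have : deriv v x = deriv (fun y : ℝ => -v (-y)) x := by rw [hveq]
    rw [this, deriv.fun_neg, deriv_comp_neg]
    ring
  have hheven : ∀ x : ℝ, h (-x) = h x := by
    intro x
    simp only [hh, hderiv_even, neg_div, Real.cosh_neg, hodd]
    ring
  -- the derivative machinery on (0, ∞)
  set D : ℝ → ℝ := fun x => lam / 2 * Real.sinh (2 * x / lam) with hD
  set F : ℝ → ℝ := fun x => (v x) ^ 2 / D x with hF
  set F' : ℝ → ℝ := fun x =>
    (2 * v x * deriv v x * D x - (v x) ^ 2 * Real.cosh (2 * x / lam)) / (D x) ^ 2 with hF'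
  have hDpos : ∀ x : ℝ, 0 < x → 0 < D x := by
    intro x hx
    have : 0 < Real.sinh (2 * x / lam) := Real.sinh_pos_iff.mpr (by positivity)
    positivity
  have hFnonneg : ∀ x : ℝ, 0 < x → 0 ≤ F x := by
    intro x hx
    exact div_nonneg (sq_nonneg _) (hDpos x hx).le
  have hhasD : ∀ x : ℝ, 0 < x → HasDerivAt F (F' x) x := by
    intro x hx
    have hN : HasDerivAt (fun y => (v y) ^ 2) (2 * v x * deriv v x) x := by
      have := ((hvd x).hasDerivAt).fun_pow 2
      simpa [mul_comm, mul_assoc, mul_left_comm] using this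
    have hinner : HasDerivAt (fun y : ℝ => 2 * y / lam) (2 / lam) x := by
      have := ((hasDerivAt_id x).const_mul 2).div_const lam
      simpa using this
    have hDd : HasDerivAt D (Real.cosh (2 * x / lam)) x := by
      have := (hinner.sinh).const_mul (lam / 2)
      have heq : lam / 2 * (Real.cosh (2 * x / lam) * (2 / lam)) = Real.cosh (2 * x / lam) := by
        field_simp
      rw [heq] at this
      exact this
    exact hN.div hDd (hDpos x hx).ne'
  -- pointwise identity : h x - F' x is a square, for x > 0
  have hkey : ∀ x : ℝ, 0 < x → F' x = h x - (deriv v x - v x / D x) ^ 2 := by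
    intro x hx
    have hs : 0 < Real.sinh (x / lam) := Real.sinh_pos_iff.mpr (by positivity)
    have hc : 0 < Real.cosh (x / lam) := Real.cosh_pos _
    have h2x : 2 * x / lam = 2 * (x / lam) := by ring
    have hDval : D x = lam * Real.sinh (x / lam) * Real.cosh (x / lam) := by
      rw [hD]; simp only []
      rw [h2x, Real.sinh_two_mul]; ring
    have hcoshval : Real.cosh (2 * x / lam) =
        Real.cosh (x / lam) ^ 2 + Real.sinh (x / lam) ^ 2 := by
      rw [h2x, Real.cosh_two_mul]
    have hpyth : Real.cosh (x / lam) ^ 2 - Real.sinh (x / lam) ^ 2 = 1 :=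
      Real.cosh_sq_sub_sinh_sq _
    simp only [hF', hh, hDval, hcoshval]
    exact coercivity_aux _ _ _ _ _ hs.ne' hc.ne' hlam' hpyth
  -- interval bound
  have hFcont' : ∀ a b : ℝ, 0 < a → a ≤ b → IntervalIntegrable F' volume a b := by
    intro a b ha hab
    apply ContinuousOn.intervalIntegrable
    have hsub : Set.uIcc a b ⊆ Set.Ioi 0 := by
      rw [Set.uIcc_of_le hab]
      intro y hy
      exact lt_of_lt_of_le ha hy.1
    have hDcont : Continuous D := by fun_prop
    apply ContinuousOn.div
    · exact Continuous.continuousOn (by fun_prop)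
    · exact (hDcont.pow 2).continuousOn
    · intro y hy
      exact pow_ne_zero _ (hDpos y (hsub hy)).ne'
  have hinterval : ∀ a b : ℝ, 0 < a → a ≤ b → F b - F a ≤ ∫ x in a..b, h x := by
    intro a b ha hab
    have hFTC : ∫ x in a..b, F' x = F b - F a := by
      apply intervalIntegral.integral_eq_sub_of_hasDerivAt
      · intro x hx
        rw [Set.uIcc_of_le hab] at hx
        exact hhasD x (lt_of_lt_of_le ha hx.1)
      · exact hFcont' a b ha hab
    rw [← hFTC]
    apply intervalIntegral.integral_mono_on hab (hFcont' a b ha hab)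
      (hhcont.intervalIntegrable a b)
    intro x hx
    have hx0 : 0 < x := lt_of_lt_of_le ha hx.1
    rw [hkey x hx0]
    nlinarith [sq_nonneg (deriv v x - v x / D x)]
  -- F tends to 0 at 0⁺
  obtain ⟨M, hM⟩ : ∃ M : ℝ, ∀ x ∈ Set.Icc (0:ℝ) 1, ‖deriv v x‖ ≤ M :=
    (isCompact_Icc).exists_bound_of_continuousOn hcd.continuousOn
  have hvbound : ∀ a : ℝ, 0 ≤ a → a ≤ 1 → |v a| ≤ M * a := by
    intro a ha ha1
    have := Convex.norm_image_sub_le_of_norm_deriv_le (f := v)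
      (fun x _ => hvd x) hM (convex_Icc (0:ℝ) 1)
      (Set.mem_Icc.mpr ⟨le_refl 0, zero_le_one⟩) (Set.mem_Icc.mpr ⟨ha, ha1⟩)
    simpa [hv0, Real.norm_eq_abs, abs_of_nonneg ha] using this
  have hFsmall : ∀ a : ℝ, 0 < a → a ≤ 1 → F a ≤ M ^ 2 * a := by
    intro a ha ha1
    have hva : |v a| ≤ M * a := hvbound a ha.le ha1
    have hM0 : 0 ≤ M := le_trans (norm_nonneg _) (hM 0 (Set.mem_Icc.mpr ⟨le_refl 0, zero_le_one⟩))
    have hv2a : (v a) ^ 2 ≤ M ^ 2 * a ^ 2 := by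
      have := sq_le_sq' (neg_le_of_abs_le hva) (le_of_abs_le hva)
      calc (v a)^2 ≤ (M * a)^2 := this
        _ = M ^ 2 * a ^ 2 := by ring
    have hDa : a < D a := by
      have h1 : 2 * a / lam < Real.sinh (2 * a / lam) := Real.self_lt_sinh_iff.mpr (by positivity)
      have : lam / 2 * (2 * a / lam) < D a := by
        rw [hD]
        exact mul_lt_mul_of_pos_left h1 (by positivity)
      calc a = lam / 2 * (2 * a / lam) := by field_simp
        _ < D a := this
    have hDa0 : 0 < D a := hDpos a ha
    calc F a = (v a) ^ 2 / D a := rfl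
      _ ≤ (M ^ 2 * a ^ 2) / a := by
          apply div_le_div₀ (by positivity) hv2a ha hDa.le
      _ = M ^ 2 * a := by field_simp
  -- the half-line integral is nonnegative
  have key : 0 ≤ ∫ x in Set.Ioi (0:ℝ), h x := by
    set s : ℕ → Set ℝ := fun n => Set.Ioc (1 / (n + 1) : ℝ) ((n:ℝ) + 1) with hs
    have hsm : ∀ n, MeasurableSet (s n) := fun n => measurableSet_Ioc
    have hsmono : Monotone s := by
      intro m n hmn
      apply Set.Ioc_subset_Ioc
      · apply one_div_le_one_div_of_le (by positivity)
        exact_mod_cast by exact_mod_cast add_le_add_left (Nat.cast_le.mpr hmn) 1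
      · exact add_le_add_left (Nat.cast_le.mpr hmn) 1
    have hsunion : (⋃ n, s n) = Set.Ioi (0:ℝ) := by
      ext x
      simp only [Set.mem_iUnion, hs, Set.mem_Ioc, Set.mem_Ioi]
      constructor
      · rintro ⟨n, hn1, _⟩
        exact lt_trans (by positivity) hn1
      · intro hx
        obtain ⟨n, hn⟩ := exists_nat_ge (max x (1/x))
        refine ⟨n, ?_, ?_⟩
        · have h1x : 1 / x ≤ n := le_trans (le_max_right _ _) hn
          rw [div_lt_iff₀ (by positivity)]
          rw [div_le_iff₀ hx] at h1x
          nlinarith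
        · have := le_trans (le_max_left x (1/x)) hn
          linarith
    have htendsto : Filter.Tendsto (fun n => ∫ x in s n, h x) Filter.atTop
        (nhds (∫ x in Set.Ioi (0:ℝ), h x)) := by
      have := tendsto_setIntegral_of_monotone hsm hsmono
        (by rw [hsunion]; exact hInt.integrableOn)
      rwa [hsunion] at this
    have hlow : ∀ n : ℕ, -(M ^ 2 * (1 / ((n:ℝ) + 1))) ≤ ∫ x in s n, h x := by
      intro n
      have ha : (0:ℝ) < 1 / ((n:ℝ) + 1) := by positivity
      have ha1 : (1:ℝ) / ((n:ℝ) + 1) ≤ 1 := by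
        rw [div_le_one (by positivity)]; linarith [Nat.cast_nonneg (α := ℝ) n]
      have hab : (1:ℝ) / ((n:ℝ) + 1) ≤ (n:ℝ) + 1 := le_trans ha1 (by linarith [Nat.cast_nonneg (α := ℝ) n])
      have heq : ∫ x in s n, h x = ∫ x in (1 / ((n:ℝ) + 1))..((n:ℝ) + 1), h x :=
        (intervalIntegral.integral_of_le hab).symm
      rw [heq]
      have h1 := hinterval (1 / ((n:ℝ) + 1)) ((n:ℝ) + 1) ha hab
      have h2 : 0 ≤ F ((n:ℝ) + 1) := hFnonneg _ (by positivity)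
      have h3 : F (1 / ((n:ℝ) + 1)) ≤ M ^ 2 * (1 / ((n:ℝ) + 1)) := hFsmall _ ha ha1
      linarith
    have hzero : Filter.Tendsto (fun n : ℕ => -(M ^ 2 * (1 / ((n:ℝ) + 1)))) Filter.atTop
        (nhds 0) := by
      have : Filter.Tendsto (fun n : ℕ => (1 / ((n:ℝ) + 1))) Filter.atTop (nhds 0) :=
        tendsto_one_div_add_atTop_nhds_zero_nat
      have := (this.const_mul (M ^ 2)).neg
      simpa using this
    have := le_of_tendsto_of_tendsto hzero htendsto (Filter.Eventually.of_forall hlow)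
    simpa using this
  -- assemble
  have hsplit : ∫ x, h x = 2 * ∫ x in Set.Ioi (0:ℝ), h x := by
    have h1 : (∫ x in Set.Iic (0:ℝ), h x) + ∫ x in Set.Ioi (0:ℝ), h x = ∫ x, h x :=
      intervalIntegral.integral_Iic_add_Ioi hInt.integrableOn hInt.integrableOn
    have h2 : ∫ x in Set.Iic (0:ℝ), h x = ∫ x in Set.Ioi (0:ℝ), h x := by
      have h3 : ∫ x in Set.Ioi (0:ℝ), h (-x) = ∫ x in Set.Iic (0:ℝ), h x := by
        simpa using integral_comp_neg_Ioi (c := (0:ℝ)) (f := h)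
      rw [← h3]
      congr 1
      exact funext fun x => hheven x
    linarith
  have hIeq : ∫ x, h x = (∫ x, (deriv v x) ^ 2)
      - (2 / lam ^ 2) * ∫ x, (1 / Real.cosh (x / lam)) ^ 2 * (v x) ^ 2 := by
    rw [hh, integral_sub hv'2 (hI2.const_mul _), integral_const_mul]
  have hfinal : 0 ≤ ∫ x, h x := by rw [hsplit]; linarith
  rw [hIeq] at hfinal
  have hc : (2 / lam ^ 2) * (∫ x, (1 / Real.cosh (x / lam)) ^ 2 * (v x) ^ 2)
      = 2 * ((1 / lam ^ 2) * ∫ x, (1 / Real.cosh (x / lam)) ^ 2 * (v x) ^ 2) := by ring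
  rw [hc] at hfinal
  linarith
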